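/- Single-letterization of the DSC-stage rate (converse step for R_AR). Let ℳ be a finite set and φ : 𝒳^n → ℳ any function, and set M = φ(X^n). Then Σ_{i=1}^n I(X_i; (M, X^{i−1}, Y_{i+1}^n) | Z_i, Y_i) ≤ H(M | Z^n, Y^n) ≤ log₂|ℳ|. In particular, if |ℳ| ≤ 2^{nR_AR} then Σ_{i=1}^n I(X_i; U_{1,i} | Z_i, Y_i) ≤ nR_AR, where U_{1,i} = (M, X^{i−1}, Y_{i+1}^n). -/

import Mathlib

open scoped BigOperators

noncomputable section

namespace IRSC

attribute [local instance] Classical.propDecidable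

/-- A bundled finite alphabet. -/
structure FinAlph where
  carrier : Type
  [fin : Fintype carrier]

attribute [instance] FinAlph.fin

section Basic

variable {Ω α β γ : Type*} [Fintype Ω]

/-- `μ` is a probability mass function on the finite type `Ω`. -/
def IsPMF (μ : Ω → ℝ) : Prop := (∀ ω, 0 ≤ μ ω) ∧ ∑ ω, μ ω = 1

/-- The probability that the random variable `f` takes the value `a` under `μ`. -/
def probOf (μ : Ω → ℝ) (f : Ω → α) (a : α) : ℝ := ∑ ω, if f ω = a then μ ω else 0

/-- The expectation of the real-valued random variable `g` under `μ`. -/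
def expect (μ : Ω → ℝ) (g : Ω → ℝ) : ℝ := ∑ ω, μ ω * g ω

/-- The Shannon entropy (base 2) `H(f)` of a random variable `f` under `μ`. -/
def entropy [Fintype α] (μ : Ω → ℝ) (f : Ω → α) : ℝ :=
  -∑ a, probOf μ f a * Real.logb 2 (probOf μ f a)

/-- The conditional entropy `H(f | g)` under `μ`. -/
def condEntropy [Fintype α] [Fintype β] (μ : Ω → ℝ) (f : Ω → α) (g : Ω → β) : ℝ :=
  entropy μ (fun ω => (f ω, g ω)) - entropy μ g

/-- The conditional mutual information `I(f ; g | h)` under `μ`. -/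
def condMI [Fintype α] [Fintype β] [Fintype γ]
    (μ : Ω → ℝ) (f : Ω → α) (g : Ω → β) (h : Ω → γ) : ℝ :=
  condEntropy μ f h + condEntropy μ g h - condEntropy μ (fun ω => (f ω, g ω)) h

/-- `MarkovChain μ f g h` says that `f − g − h` forms a Markov chain under `μ`, i.e.
`f` and `h` are conditionally independent given `g`. -/
def MarkovChain (μ : Ω → ℝ) (f : Ω → α) (g : Ω → β) (h : Ω → γ) : Prop :=
  ∀ a b c,
    probOf μ (fun ω => (f ω, g ω, h ω)) (a, b, c) * probOf μ g b =
      probOf μ (fun ω => (f ω, g ω)) (a, b) * probOf μ (fun ω => (g ω, h ω)) (b, c)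

end Basic

/-- The i.i.d. distribution of `n` copies of `p`. -/
def iid {W : Type*} [Fintype W] (p : W → ℝ) (n : ℕ) : (Fin n → W) → ℝ :=
  fun w => ∏ i, p (w i)

/-- The past `(x_1, …, x_{i-1})` of a sequence `x` relative to position `i`. -/
def past {n : ℕ} {α : Type*} (i : Fin n) (x : Fin n → α) : {j : Fin n // j < i} → α :=
  fun j => x j.1

/-- The future `(x_{i+1}, …, x_n)` of a sequence `x` relative to position `i`. -/
def fut {n : ℕ} {α : Type*} (i : Fin n) (x : Fin n → α) : {j : Fin n // i < j} → α :=
  fun j => x j.1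

section Aux

variable {Ω α β γ δ : Type*} [Fintype Ω] {μ : Ω → ℝ}

lemma probOf_nonneg (hμ : ∀ ω, 0 ≤ μ ω) (f : Ω → α) (a : α) : 0 ≤ probOf μ f a :=
  Finset.sum_nonneg fun ω _ => by by_cases h : f ω = a <;> simp [probOf, h, hμ ω]

/-- Grouping: expectation of `F ∘ f` equals sum over values. -/
lemma sum_probOf_mul [Fintype α] (f : Ω → α) (F : α → ℝ) :
    ∑ a, probOf μ f a * F a = ∑ ω, μ ω * F (f ω) := by
  classical
  unfold probOf
  simp_rw [Finset.sum_mul, ite_mul, zero_mul]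
  rw [Finset.sum_comm]
  refine Finset.sum_congr rfl fun ω _ => ?_
  rw [Finset.sum_ite_eq Finset.univ (f ω) (fun a => μ ω * F a)]
  simp

lemma sum_probOf [Fintype α] (hμ1 : ∑ ω, μ ω = 1) (f : Ω → α) :
    ∑ a, probOf μ f a = 1 := by
  have := sum_probOf_mul (μ := μ) f (fun _ => 1)
  simpa [hμ1] using this

/-- probOf congruence under equivalent value conditions. -/
lemma probOf_congr {f : Ω → α} {f' : Ω → β} {a : α} {b : β}
    (h : ∀ ω, f ω = a ↔ f' ω = b) : probOf μ f a = probOf μ f' b := by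
  unfold probOf; exact Finset.sum_congr rfl fun ω _ => by
    by_cases hh : f ω = a
    · rw [if_pos hh, if_pos ((h ω).1 hh)]
    · rw [if_neg hh, if_neg (fun c => hh ((h ω).2 c))]

lemma entropy_pointwise [Fintype α] (f : Ω → α) :
    entropy μ f = -∑ ω, μ ω * Real.logb 2 (probOf μ f (f ω)) := by
  rw [entropy, sum_probOf_mul]

/-- Entropy congruence: same "equality pattern" gives same entropy. -/
lemma entropy_congr [Fintype α] [Fintype β] {f : Ω → α} {f' : Ω → β}
    (h : ∀ ω ω', f ω = f ω' ↔ f' ω = f' ω') : entropy μ f = entropy μ f' := by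
  rw [entropy_pointwise, entropy_pointwise]
  congr 1
  refine Finset.sum_congr rfl fun ω _ => ?_
  have : probOf μ f (f ω) = probOf μ f' (f' ω) :=
    probOf_congr fun ω' => ⟨fun hh => (h ω' ω).1 hh, fun hh => (h ω' ω).2 hh⟩
  rw [this]

/-- Gibbs' inequality. -/
lemma gibbs {ι : Type*} [Fintype ι] (P Q : ι → ℝ)
    (hP0 : ∀ i, 0 ≤ P i) (hQ0 : ∀ i, 0 ≤ Q i) (hP1 : ∑ i, P i = 1)
    (hQ1 : ∑ i, Q i ≤ 1) (hPQ : ∀ i, P i ≠ 0 → Q i ≠ 0) :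
    ∑ i, P i * Real.logb 2 (Q i) ≤ ∑ i, P i * Real.logb 2 (P i) := by
  classical
  set s : Finset ι := Finset.univ.filter (fun i => P i ≠ 0) with hs
  have hmem : ∀ i ∈ s, 0 < P i := fun i hi => by
    have := (Finset.mem_filter.mp hi).2
    exact lt_of_le_of_ne (hP0 i) (Ne.symm this)
  have hQpos : ∀ i ∈ s, 0 < Q i := fun i hi =>
    lt_of_le_of_ne (hQ0 i) (Ne.symm (hPQ i (Finset.mem_filter.mp hi).2))
  have hrestrict : ∀ (G : ι → ℝ), ∑ i, P i * G i = ∑ i ∈ s, P i * G i := by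
    intro G
    rw [← Finset.sum_filter_add_sum_filter_not Finset.univ (fun i => P i ≠ 0)
      (fun i => P i * G i)]
    have : ∑ i ∈ Finset.univ.filter (fun i => ¬ P i ≠ 0), P i * G i = 0 := by
      refine Finset.sum_eq_zero fun i hi => ?_
      have := (Finset.mem_filter.mp hi).2
      simp only [not_not] at this
      simp [this]
    rw [this, add_zero]
  have hPs1 : ∑ i ∈ s, P i = 1 := by
    have := hrestrict (fun _ => 1); simp only [mul_one] at this; rw [← this, hP1]
  rw [hrestrict (fun i => Real.logb 2 (Q i)), hrestrict (fun i => Real.logb 2 (P i))]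
  rw [← sub_nonpos, ← Finset.sum_sub_distrib]
  have key : ∑ i ∈ s, (P i * Real.logb 2 (Q i) - P i * Real.logb 2 (P i))
      = (Real.log 2)⁻¹ * ∑ i ∈ s, P i * Real.log (Q i / P i) := by
    rw [Finset.mul_sum]
    refine Finset.sum_congr rfl fun i hi => ?_
    rw [Real.log_div (hQpos i hi).ne' (hmem i hi).ne']
    simp only [Real.logb]
    ring
  rw [key]
  have hjensen : ∑ i ∈ s, P i * Real.log (Q i / P i)
      ≤ Real.log (∑ i ∈ s, P i * (Q i / P i)) := by
    have := ConcaveOn.le_map_sum (strictConcaveOn_log_Ioi.concaveOn)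
      (t := s) (w := P) (p := fun i => Q i / P i)
      (fun i hi => (hmem i hi).le) hPs1
      (fun i hi => Set.mem_Ioi.mpr (div_pos (hQpos i hi) (hmem i hi)))
    simpa [smul_eq_mul] using this
  have hsum : ∑ i ∈ s, P i * (Q i / P i) = ∑ i ∈ s, Q i := by
    refine Finset.sum_congr rfl fun i hi => ?_
    rw [mul_div_assoc', mul_comm, mul_div_assoc, div_self (hmem i hi).ne', mul_one]
  have hlog : Real.log (∑ i ∈ s, P i * (Q i / P i)) ≤ 0 := by
    rw [hsum]
    refine Real.log_nonpos (Finset.sum_nonneg fun i _ => hQ0 i) ?_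
    calc ∑ i ∈ s, Q i ≤ ∑ i, Q i :=
          Finset.sum_le_sum_of_subset_of_nonneg (Finset.subset_univ s)
            (fun i _ _ => hQ0 i)
      _ ≤ 1 := hQ1
  have : (0:ℝ) < Real.log 2 := Real.log_pos one_lt_two
  have h2 : (Real.log 2)⁻¹ * ∑ i ∈ s, P i * Real.log (Q i / P i) ≤ 0 := by
    apply mul_nonpos_of_nonneg_of_nonpos (inv_nonneg.mpr this.le)
    exact le_trans hjensen hlog
  exact h2

lemma probOf_sum_fst [Fintype α] (F : Ω → α) (G : Ω → γ) (c : γ) :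
    ∑ a, probOf μ (fun ω => (F ω, G ω)) (a, c) = probOf μ G c := by
  classical
  simp only [probOf]
  rw [Finset.sum_comm]
  refine Finset.sum_congr rfl fun ω _ => ?_
  refine Eq.trans (Finset.sum_eq_single (F ω)
    (fun b _ hb => if_neg (fun h => hb ((Prod.ext_iff.mp h).1.symm)))
    (fun habs => absurd (Finset.mem_univ _) habs)) ?_
  by_cases h2 : G ω = c
  · rw [if_pos (by rw [h2]), if_pos h2]
  · rw [if_neg (fun h => h2 (Prod.ext_iff.mp h).2), if_neg h2]

lemma condEntropy_pointwise [Fintype α] [Fintype β] (f : Ω → α) (g : Ω → β) :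
    condEntropy μ f g = ∑ ω, μ ω * (Real.logb 2 (probOf μ g (g ω))
      - Real.logb 2 (probOf μ (fun ω' => (f ω', g ω')) (f ω, g ω))) := by
  rw [condEntropy, entropy_pointwise, entropy_pointwise]
  rw [neg_sub_neg, ← Finset.sum_sub_distrib]
  exact Finset.sum_congr rfl fun ω _ => by ring

/-- Submodularity / conditioning reduces entropy. -/
lemma condEntropy_pair_le [Fintype α] [Fintype β] [Fintype γ] (hμ : IsPMF μ)
    (f : Ω → α) (g : Ω → β) (h : Ω → γ) :
    condEntropy μ f (fun ω => (g ω, h ω)) ≤ condEntropy μ f h := by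
  classical
  obtain ⟨hμ0, hμ1⟩ := hμ
  set t : Ω → α × β × γ := fun ω => (f ω, g ω, h ω) with ht
  set P : α × β × γ → ℝ := probOf μ t with hP
  set Pfh : α × γ → ℝ := probOf μ (fun ω => (f ω, h ω)) with hPfh
  set Pgh : β × γ → ℝ := probOf μ (fun ω => (g ω, h ω)) with hPgh
  set Ph : γ → ℝ := probOf μ h with hPh
  -- marginal identities
  have m1 : ∀ b c, ∑ a, P (a, b, c) = Pgh (b, c) := fun b c =>
    probOf_sum_fst f (fun ω => (g ω, h ω)) (b, c)
  have m2 : ∀ a c, ∑ b, P (a, b, c) = Pfh (a, c) := by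
    intro a c
    have : ∀ b, P (a, b, c)
        = probOf μ (fun ω => (g ω, (f ω, h ω))) (b, (a, c)) := fun b =>
      probOf_congr (fun ω => by simp [ht, Prod.ext_iff]; tauto)
    simp_rw [this]
    exact probOf_sum_fst g (fun ω => (f ω, h ω)) (a, c)
  have m3 : ∀ c, ∑ a, Pfh (a, c) = Ph c := fun c => probOf_sum_fst f h c
  have m4 : ∀ c, ∑ b, Pgh (b, c) = Ph c := fun c => probOf_sum_fst g h c
  have hP0 : ∀ x, 0 ≤ P x := fun x => probOf_nonneg hμ0 _ _
  have hPfh0 : ∀ x, 0 ≤ Pfh x := fun x => probOf_nonneg hμ0 _ _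
  have hPgh0 : ∀ x, 0 ≤ Pgh x := fun x => probOf_nonneg hμ0 _ _
  have hPh0 : ∀ c, 0 ≤ Ph c := fun c => probOf_nonneg hμ0 _ _
  have hle_fh : ∀ a b c, P (a, b, c) ≤ Pfh (a, c) := by
    intro a b c
    rw [← m2 a c]
    exact Finset.single_le_sum (fun b' _ => hP0 (a, b', c)) (Finset.mem_univ b)
  have hle_gh : ∀ a b c, P (a, b, c) ≤ Pgh (b, c) := by
    intro a b c
    rw [← m1 b c]
    exact Finset.single_le_sum (fun a' _ => hP0 (a', b, c)) (Finset.mem_univ a)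
  have hle_h_fh : ∀ a c, Pfh (a, c) ≤ Ph c := by
    intro a c
    rw [← m3 c]
    exact Finset.single_le_sum (fun a' _ => hPfh0 (a', c)) (Finset.mem_univ a)
  have hle_h_gh : ∀ b c, Pgh (b, c) ≤ Ph c := by
    intro b c
    rw [← m4 c]
    exact Finset.single_le_sum (fun b' _ => hPgh0 (b', c)) (Finset.mem_univ b)
  set Q : α × β × γ → ℝ := fun x => Pfh (x.1, x.2.2) * Pgh (x.2.1, x.2.2) / Ph x.2.2
    with hQ
  have hQ0 : ∀ x, 0 ≤ Q x := fun x =>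
    div_nonneg (mul_nonneg (hPfh0 _) (hPgh0 _)) (hPh0 _)
  have hP1 : ∑ x, P x = 1 := sum_probOf hμ1 t
  have hQ1 : ∑ x, Q x ≤ 1 := by
    have : ∑ x : α × β × γ, Q x = ∑ y : β × γ, Pgh y := by
      rw [Fintype.sum_prod_type]
      rw [Finset.sum_comm]
      refine Finset.sum_congr rfl fun y _ => ?_
      obtain ⟨b, c⟩ := y
      by_cases hc : Ph c = 0
      · have hz : Pgh (b, c) = 0 := le_antisymm (by rw [← hc]; exact hle_h_gh b c) (hPgh0 _)
        simp only [hQ, hz, hc]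
        simp
      · have : ∑ a, Pfh (a, c) * Pgh (b, c) / Ph c
            = (∑ a, Pfh (a, c)) * (Pgh (b, c) / Ph c) := by
          rw [Finset.sum_mul]
          exact Finset.sum_congr rfl fun a _ => by ring
        simp only [hQ]
        rw [this, m3 c, mul_div_assoc', mul_comm, mul_div_assoc, div_self hc, mul_one]
    rw [this, sum_probOf hμ1]
  have hPQ : ∀ x, P x ≠ 0 → Q x ≠ 0 := by
    rintro ⟨a, b, c⟩ hne
    have hp : 0 < P (a, b, c) := lt_of_le_of_ne (hP0 _) (Ne.symm hne)
    have h1 : 0 < Pfh (a, c) := lt_of_lt_of_le hp (hle_fh a b c)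
    have h2 : 0 < Pgh (b, c) := lt_of_lt_of_le hp (hle_gh a b c)
    have h3 : 0 < Ph c := lt_of_lt_of_le h1 (hle_h_fh a c)
    exact (div_pos (mul_pos h1 h2) h3).ne'
  have hgibbs := gibbs P Q hP0 hQ0 hP1 hQ1 hPQ
  -- rewrite both condEntropies pointwise and reduce to gibbs
  rw [condEntropy_pointwise, condEntropy_pointwise]
  rw [← sub_nonneg, ← Finset.sum_sub_distrib]
  have hrw : ∀ ω, μ ω * (Real.logb 2 (probOf μ h (h ω))
        - Real.logb 2 (probOf μ (fun ω' => (f ω', h ω')) (f ω, h ω)))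
      - μ ω * (Real.logb 2 (probOf μ (fun ω' => (g ω', h ω')) (g ω, h ω))
        - Real.logb 2 (probOf μ (fun ω' => (f ω', g ω', h ω')) (f ω, g ω, h ω)))
      = μ ω * ((fun x : α × β × γ => Real.logb 2 (P x)
          - (Real.logb 2 (Pfh (x.1, x.2.2)) + Real.logb 2 (Pgh (x.2.1, x.2.2))
            - Real.logb 2 (Ph x.2.2))) (t ω)) := by
    intro ω
    simp only [ht, hP, hPfh, hPgh, hPh]
    ring
  calc (0:ℝ) ≤ ∑ x, P x * Real.logb 2 (P x) - ∑ x, P x * (Real.logb 2 (Pfh (x.1, x.2.2))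
          + Real.logb 2 (Pgh (x.2.1, x.2.2)) - Real.logb 2 (Ph x.2.2)) := by
        rw [sub_nonneg]
        refine le_trans (le_of_eq ?_) hgibbs
        refine Finset.sum_congr rfl fun x _ => ?_
        rcases eq_or_ne (P x) 0 with hx | hx
        · simp [hx]
        obtain ⟨a, b, c⟩ := x
        have hp : 0 < P (a, b, c) := lt_of_le_of_ne (hP0 _) (Ne.symm hx)
        have h1 : 0 < Pfh (a, c) := lt_of_lt_of_le hp (hle_fh a b c)
        have h2 : 0 < Pgh (b, c) := lt_of_lt_of_le hp (hle_gh a b c)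
        have h3 : 0 < Ph c := lt_of_lt_of_le h1 (hle_h_fh a c)
        simp only [hQ]
        rw [Real.logb_div (mul_pos h1 h2).ne' h3.ne', Real.logb_mul h1.ne' h2.ne']
    _ = ∑ x, P x * (Real.logb 2 (P x) - (Real.logb 2 (Pfh (x.1, x.2.2))
          + Real.logb 2 (Pgh (x.2.1, x.2.2)) - Real.logb 2 (Ph x.2.2))) := by
        rw [← Finset.sum_sub_distrib]
        exact Finset.sum_congr rfl fun x _ => by ring
    _ = ∑ ω, μ ω * ((fun x : α × β × γ => Real.logb 2 (P x)
          - (Real.logb 2 (Pfh (x.1, x.2.2)) + Real.logb 2 (Pgh (x.2.1, x.2.2))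
            - Real.logb 2 (Ph x.2.2))) (t ω)) := sum_probOf_mul t _
    _ = _ := by
        refine Finset.sum_congr rfl fun ω _ => ?_
        rw [← hrw ω]

lemma condEntropy_congr {α' β' : Type*} [Fintype α] [Fintype β] [Fintype α'] [Fintype β']
    {f : Ω → α} {f' : Ω → α'} {g : Ω → β} {g' : Ω → β'}
    (hg : ∀ ω ω', g ω = g ω' ↔ g' ω = g' ω')
    (hfg : ∀ ω ω', (f ω = f ω' ∧ g ω = g ω') ↔ (f' ω = f' ω' ∧ g' ω = g' ω')) :
    condEntropy μ f g = condEntropy μ f' g' := by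
  unfold condEntropy
  rw [entropy_congr hg, entropy_congr (f := fun ω => (f ω, g ω))
    (f' := fun ω => (f' ω, g' ω)) (fun ω ω' => by
      simp only [Prod.ext_iff]; exact hfg ω ω')]

lemma chainRule [Fintype α] [Fintype β] [Fintype γ] (f : Ω → α) (g : Ω → β) (h : Ω → γ) :
    condEntropy μ (fun ω => (f ω, g ω)) h
      = condEntropy μ f (fun ω => (g ω, h ω)) + condEntropy μ g h := by
  unfold condEntropy
  have e : entropy μ (fun ω => ((f ω, g ω), h ω))
      = entropy μ (fun ω => (f ω, (g ω, h ω))) :=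
    entropy_congr (fun ω ω' => by simp only [Prod.ext_iff]; tauto)
  rw [e]; ring

lemma condMI_eq [Fintype α] [Fintype β] [Fintype γ] (f : Ω → α) (g : Ω → β) (h : Ω → γ) :
    condMI μ f g h = condEntropy μ f h - condEntropy μ f (fun ω => (g ω, h ω)) := by
  unfold condMI
  rw [chainRule]; ring

lemma condEntropy_mono {β' : Type*} [Fintype α] [Fintype β] [Fintype β'] (hμ : IsPMF μ)
    {f : Ω → α} {g : Ω → β} {g' : Ω → β'}
    (hdet : ∀ ω ω', g ω = g ω' → g' ω = g' ω') :
    condEntropy μ f g ≤ condEntropy μ f g' := by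
  have h1 : condEntropy μ f g = condEntropy μ f (fun ω => (g ω, g' ω)) := by
    refine condEntropy_congr (fun ω ω' => ?_) (fun ω ω' => ?_)
    · constructor
      · intro h; rw [Prod.ext_iff]; exact ⟨h, hdet _ _ h⟩
      · intro h; exact (Prod.ext_iff.mp h).1
    · constructor
      · rintro ⟨h1, h2⟩; exact ⟨h1, by rw [Prod.ext_iff]; exact ⟨h2, hdet _ _ h2⟩⟩
      · rintro ⟨h1, h2⟩; exact ⟨h1, (Prod.ext_iff.mp h2).1⟩
  rw [h1]
  exact condEntropy_pair_le hμ f g g'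

lemma condEntropy_le_entropy [Fintype α] [Fintype β] (hμ : IsPMF μ)
    (f : Ω → α) (g : Ω → β) : condEntropy μ f g ≤ entropy μ f := by
  have h1 : condEntropy μ f g ≤ condEntropy μ f (fun _ => (0 : Fin 1)) :=
    condEntropy_mono hμ (fun _ _ _ => rfl)
  refine le_trans h1 (le_of_eq ?_)
  unfold condEntropy
  have e1 : entropy μ (fun ω => (f ω, (0:Fin 1))) = entropy μ f :=
    entropy_congr (fun ω ω' => by simp [Prod.ext_iff])
  have hp : probOf μ (fun _ : Ω => (0:Fin 1)) 0 = 1 := by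
    simp [probOf, hμ.2]
  have e2 : entropy μ (fun _ : Ω => (0:Fin 1)) = 0 := by
    simp [entropy, Fin.sum_univ_one, hp]
  rw [e1, e2, sub_zero]

lemma condEntropy_eq_zero_of_det [Fintype α] [Fintype β]
    {f : Ω → α} {g : Ω → β} (hdet : ∀ ω ω', g ω = g ω' → f ω = f ω') :
    condEntropy μ f g = 0 := by
  unfold condEntropy
  rw [entropy_congr (f := fun ω => (f ω, g ω)) (f' := g) (fun ω ω' => by
    simp only [Prod.ext_iff]
    exact ⟨fun h => h.2, fun h => ⟨hdet _ _ h, h⟩⟩), sub_self]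

lemma entropy_le_logb_card [Fintype α] (hμ : IsPMF μ) (f : Ω → α) :
    entropy μ f ≤ Real.logb 2 (Fintype.card α) := by
  rcases isEmpty_or_nonempty Ω with hΩ | hΩ
  · exfalso; have := hμ.2; simp at this
  have hα : Nonempty α := ⟨f (Classical.arbitrary Ω)⟩
  have hcard : 0 < (Fintype.card α : ℝ) := by exact_mod_cast Fintype.card_pos
  have hg := gibbs (probOf μ f) (fun _ => (Fintype.card α : ℝ)⁻¹)
    (probOf_nonneg hμ.1 f) (fun _ => inv_nonneg.mpr hcard.le) (sum_probOf hμ.2 f)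
    (by
      rw [Finset.sum_const, Finset.card_univ, nsmul_eq_mul,
        mul_inv_cancel₀ hcard.ne'])
    (fun a _ => inv_ne_zero hcard.ne')
  have hL : ∑ a, probOf μ f a * Real.logb 2 (Fintype.card α : ℝ)⁻¹
      = - Real.logb 2 (Fintype.card α) := by
    rw [← Finset.sum_mul, sum_probOf hμ.2, one_mul, Real.logb_inv]
  rw [hL] at hg
  unfold entropy
  linarith

lemma probOf_equiv {Ω' : Type*} [Fintype Ω'] (e : Ω' ≃ Ω) (f : Ω → α) (a : α) :
    probOf (fun ω' => μ (e ω')) (fun ω' => f (e ω')) a = probOf μ f a := by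
  unfold probOf
  exact Equiv.sum_comp e (fun ω => if f ω = a then μ ω else 0)

lemma entropy_equiv {Ω' : Type*} [Fintype Ω'] [Fintype α] (e : Ω' ≃ Ω) (f : Ω → α) :
    entropy (fun ω' => μ (e ω')) (fun ω' => f (e ω')) = entropy μ f := by
  unfold entropy
  congr 1
  exact Finset.sum_congr rfl fun a _ => by rw [probOf_equiv e f a]

lemma condEntropy_equiv {Ω' : Type*} [Fintype Ω'] [Fintype α] [Fintype β]
    (e : Ω' ≃ Ω) (f : Ω → α) (g : Ω → β) :
    condEntropy (fun ω' => μ (e ω')) (fun ω' => f (e ω')) (fun ω' => g (e ω'))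
      = condEntropy μ f g := by
  unfold condEntropy
  rw [entropy_equiv e g, entropy_equiv e (fun ω => (f ω, g ω))]

section Prod
variable {Ω1 Ω2 : Type*} [Fintype Ω1] [Fintype Ω2] {μ1 : Ω1 → ℝ} {μ2 : Ω2 → ℝ}

lemma probOf_prod [Fintype α] [Fintype β] (F : Ω1 → α) (G : Ω2 → β) (a : α) (b : β) :
    probOf (fun q : Ω1 × Ω2 => μ1 q.1 * μ2 q.2) (fun q => (F q.1, G q.2)) (a, b)
      = probOf μ1 F a * probOf μ2 G b := by
  unfold probOf
  rw [Fintype.sum_prod_type, Finset.sum_mul_sum]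
  refine Finset.sum_congr rfl fun x _ => Finset.sum_congr rfl fun y _ => ?_
  by_cases h1 : F x = a <;> by_cases h2 : G y = b
  · rw [if_pos (show (F x, G y) = (a, b) by rw [h1, h2]), if_pos h1, if_pos h2]
  · rw [if_neg (fun h => h2 (Prod.ext_iff.mp h).2), if_neg h2, mul_zero]
  · rw [if_neg (fun h => h1 (Prod.ext_iff.mp h).1), if_neg h1, zero_mul]
  · rw [if_neg (fun h => h1 (Prod.ext_iff.mp h).1), if_neg h1, zero_mul]

lemma entropy_prod [Fintype α] [Fintype β] (h1 : ∑ x, μ1 x = 1) (h2 : ∑ y, μ2 y = 1)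
    (F : Ω1 → α) (G : Ω2 → β) :
    entropy (fun q : Ω1 × Ω2 => μ1 q.1 * μ2 q.2) (fun q => (F q.1, G q.2))
      = entropy μ1 F + entropy μ2 G := by
  have hlog : ∀ u v : ℝ, u * v * Real.logb 2 (u * v)
      = (u * Real.logb 2 u) * v + u * (v * Real.logb 2 v) := by
    intro u v
    rcases eq_or_ne u 0 with hu | hu
    · simp [hu]
    rcases eq_or_ne v 0 with hv | hv
    · simp [hv]
    rw [Real.logb_mul hu hv]; ring
  unfold entropy
  rw [Fintype.sum_prod_type]
  have key : ∀ x : α, ∀ y : β,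
      probOf (fun q : Ω1 × Ω2 => μ1 q.1 * μ2 q.2) (fun q => (F q.1, G q.2)) (x, y)
        * Real.logb 2 (probOf (fun q : Ω1 × Ω2 => μ1 q.1 * μ2 q.2)
            (fun q => (F q.1, G q.2)) (x, y))
      = (probOf μ1 F x * Real.logb 2 (probOf μ1 F x)) * probOf μ2 G y
        + probOf μ1 F x * (probOf μ2 G y * Real.logb 2 (probOf μ2 G y)) := by
    intro x y
    rw [probOf_prod F G x y, hlog]
  calc -∑ x : α, ∑ y : β, probOf (fun q : Ω1 × Ω2 => μ1 q.1 * μ2 q.2)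
          (fun q => (F q.1, G q.2)) (x, y)
          * Real.logb 2 (probOf (fun q : Ω1 × Ω2 => μ1 q.1 * μ2 q.2)
            (fun q => (F q.1, G q.2)) (x, y))
      = -∑ x : α, ∑ y : β, ((probOf μ1 F x * Real.logb 2 (probOf μ1 F x)) * probOf μ2 G y
          + probOf μ1 F x * (probOf μ2 G y * Real.logb 2 (probOf μ2 G y))) := by
        congr 1
        exact Finset.sum_congr rfl fun x _ => Finset.sum_congr rfl fun y _ => key x y
    _ = _ := by
        simp only [Finset.sum_add_distrib, ← Finset.mul_sum, ← Finset.sum_mul]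
        rw [sum_probOf h1 F, sum_probOf h2 G]
        ring

lemma entropy_fst [Fintype α] (h2 : ∑ y, μ2 y = 1) (F : Ω1 → α) :
    entropy (fun q : Ω1 × Ω2 => μ1 q.1 * μ2 q.2) (fun q => F q.1) = entropy μ1 F := by
  have hp : ∀ a, probOf (fun q : Ω1 × Ω2 => μ1 q.1 * μ2 q.2) (fun q => F q.1) a
      = probOf μ1 F a := by
    intro a
    have hc : probOf (fun q : Ω1 × Ω2 => μ1 q.1 * μ2 q.2) (fun q => F q.1) a
        = probOf (fun q : Ω1 × Ω2 => μ1 q.1 * μ2 q.2)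
            (fun q => (F q.1, (0:Fin 1))) (a, 0) :=
      probOf_congr (fun q => by simp [Prod.ext_iff])
    have hone : probOf μ2 (fun _ : Ω2 => (0:Fin 1)) 0 = 1 := by
      simp [probOf, h2]
    rw [hc, probOf_prod F (fun _ : Ω2 => (0:Fin 1)) a 0, hone, mul_one]
  unfold entropy
  congr 1
  exact Finset.sum_congr rfl fun a _ => by rw [hp a]

lemma condEntropy_indep [Fintype α] [Fintype β] [Fintype γ]
    (hμ1 : IsPMF μ1) (hμ2 : IsPMF μ2) (F : Ω1 → α) (w : Ω2 → β) (G : Ω1 → γ) :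
    condEntropy (fun q : Ω1 × Ω2 => μ1 q.1 * μ2 q.2)
        (fun q => F q.1) (fun q => (w q.2, G q.1))
      = condEntropy (fun q : Ω1 × Ω2 => μ1 q.1 * μ2 q.2)
        (fun q => F q.1) (fun q => G q.1) := by
  unfold condEntropy
  have e1 : entropy (fun q : Ω1 × Ω2 => μ1 q.1 * μ2 q.2)
        (fun q => (F q.1, (w q.2, G q.1)))
      = entropy (fun q : Ω1 × Ω2 => μ1 q.1 * μ2 q.2)
        (fun q => ((F q.1, G q.1), w q.2)) :=
    entropy_congr (fun ω ω' => by simp only [Prod.ext_iff]; tauto)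
  have e2 : entropy (fun q : Ω1 × Ω2 => μ1 q.1 * μ2 q.2) (fun q => (w q.2, G q.1))
      = entropy (fun q : Ω1 × Ω2 => μ1 q.1 * μ2 q.2) (fun q => (G q.1, w q.2)) :=
    entropy_congr (fun ω ω' => by simp only [Prod.ext_iff]; tauto)
  have e3 : entropy (fun q : Ω1 × Ω2 => μ1 q.1 * μ2 q.2) (fun q => (F q.1, G q.1))
      = entropy μ1 (fun x => (F x, G x)) := entropy_fst hμ2.2 (fun x => (F x, G x))
  have e4 : entropy (fun q : Ω1 × Ω2 => μ1 q.1 * μ2 q.2) (fun q => G q.1)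
      = entropy μ1 G := entropy_fst hμ2.2 G
  rw [e1, e2, e3, e4,
    entropy_prod hμ1.2 hμ2.2 (fun x => (F x, G x)) w,
    entropy_prod hμ1.2 hμ2.2 G w]
  ring

end Prod

lemma iid_isPMF {W : Type*} [Fintype W] {p : W → ℝ} (hp : IsPMF p) (n : ℕ) :
    IsPMF (iid p n) := by
  constructor
  · intro w; exact Finset.prod_nonneg fun j _ => hp.1 _
  · rw [show (∑ w, iid p n w) = ∑ w : Fin n → W, ∏ j, p (w j) from rfl,
      ← Fintype.prod_sum (fun (_ : Fin n) (w : W) => p w)]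
    simp [hp.2]

lemma indep_coord {W α β γ : Type*} [Fintype W] [Fintype α] [Fintype β] [Fintype γ]
    {p : W → ℝ} (hp : IsPMF p) {n : ℕ} (i : Fin n)
    (F : W → α) (G1 : (Fin n → W) → β) (G2 : W → γ)
    (hG1 : ∀ ω ω' : Fin n → W, (∀ j, j ≠ i → ω j = ω' j) → G1 ω = G1 ω') :
    condEntropy (iid p n) (fun ω => F (ω i)) (fun ω => (G1 ω, G2 (ω i)))
      = condEntropy (iid p n) (fun ω => F (ω i)) (fun ω => G2 (ω i)) := by
  classical
  have hW : Nonempty W := by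
    rcases isEmpty_or_nonempty W with h | h
    · exfalso; have := hp.2; simp at this
    · exact h
  set e : (W × ({j : Fin n // j ≠ i} → W)) ≃ (Fin n → W) := (Equiv.funSplitAt i W).symm
    with he
  set μ2 : ({j : Fin n // j ≠ i} → W) → ℝ := fun r => ∏ j, p (r j) with hμ2def
  have hμ2 : IsPMF μ2 := by
    constructor
    · intro r; exact Finset.prod_nonneg fun j _ => hp.1 _
    · rw [show (∑ r, μ2 r) = ∑ r : {j : Fin n // j ≠ i} → W, ∏ j, p (r j) from rfl,
        ← Fintype.prod_sum (fun (_ : {j : Fin n // j ≠ i}) (w : W) => p w)]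
      simp [hp.2]
  have hei : ∀ q : W × ({j : Fin n // j ≠ i} → W), e q i = q.1 := by
    intro q; simp [he, Equiv.funSplitAt_symm_apply]
  have hej : ∀ (q : W × ({j : Fin n // j ≠ i} → W)) (j : Fin n) (h : j ≠ i),
      e q j = q.2 ⟨j, h⟩ := by
    intro q j h
    simp [he, Equiv.funSplitAt_symm_apply, h]
  have hsplit : ∀ q : W × ({j : Fin n // j ≠ i} → W),
      iid p n (e q) = p q.1 * μ2 q.2 := by
    intro q
    unfold iid
    rw [← Finset.mul_prod_erase Finset.univ (fun j => p (e q j)) (Finset.mem_univ i),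
      hei q]
    congr 1
    rw [Finset.prod_subtype (p := fun j => j ≠ i) (Finset.univ.erase i)
      (fun j => by simp [Finset.mem_erase, and_comm]) (fun j => p (e q j))]
    exact Finset.prod_congr rfl fun j _ => by rw [hej q j.1 j.2]
  set x0 : W := Classical.arbitrary W with hx0
  set w0 : ({j : Fin n // j ≠ i} → W) → β := fun r => G1 (e (x0, r)) with hw0
  have hG1e : ∀ q : W × ({j : Fin n // j ≠ i} → W), G1 (e q) = w0 q.2 := by
    intro q
    refine hG1 _ _ fun j hj => ?_
    rw [hej q j hj, hej (x0, q.2) j hj]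
  have hmeq : (fun q : W × ({j : Fin n // j ≠ i} → W) => iid p n (e q))
      = fun q => p q.1 * μ2 q.2 := funext hsplit
  have h1 : condEntropy (iid p n) (fun ω => F (ω i)) (fun ω => (G1 ω, G2 (ω i)))
      = condEntropy (fun q : W × ({j : Fin n // j ≠ i} → W) => p q.1 * μ2 q.2)
          (fun q => F q.1) (fun q => (w0 q.2, G2 q.1)) := by
    rw [← condEntropy_equiv (μ := iid p n) e (fun ω => F (ω i))
      (fun ω => (G1 ω, G2 (ω i)))]
    rw [hmeq]
    congr 1
    · funext q; rw [hei q]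
    · funext q; rw [hei q, hG1e q]
  have h2 : condEntropy (iid p n) (fun ω => F (ω i)) (fun ω => G2 (ω i))
      = condEntropy (fun q : W × ({j : Fin n // j ≠ i} → W) => p q.1 * μ2 q.2)
          (fun q => F q.1) (fun q => G2 q.1) := by
    rw [← condEntropy_equiv (μ := iid p n) e (fun ω => F (ω i)) (fun ω => G2 (ω i))]
    rw [hmeq]
    congr 1
    · funext q; rw [hei q]
    · funext q; rw [hei q]
  rw [h1, h2]
  exact condEntropy_indep hp hμ2 F w0 G2

lemma condEntropy_congr_right {β' : Type*} [Fintype α] [Fintype β] [Fintype β']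
    {f : Ω → α} {g : Ω → β} {g' : Ω → β'}
    (hg : ∀ ω ω', g ω = g ω' ↔ g' ω = g' ω') :
    condEntropy μ f g = condEntropy μ f g' :=
  condEntropy_congr hg (fun ω ω' => and_congr_right fun _ => hg ω ω')

lemma condEntropy_congr_left {α' : Type*} [Fintype α] [Fintype α'] [Fintype β]
    {f : Ω → α} {f' : Ω → α'} {g : Ω → β}
    (hf : ∀ ω ω', f ω = f ω' ↔ f' ω = f' ω') :
    condEntropy μ f g = condEntropy μ f' g :=
  condEntropy_congr (fun _ _ => Iff.rfl) (fun ω ω' => and_congr_left fun _ => hf ω ω')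

lemma chain_tuple {𝒳 γ : Type*} [Fintype 𝒳] [Fintype γ] :
    ∀ (m : ℕ) (f : Fin m → Ω → 𝒳) (C : Ω → γ),
    condEntropy μ (fun ω => fun j => f j ω) C
      = ∑ i : Fin m, condEntropy μ (f i)
          (fun ω => ((fun j : {j : Fin m // j < i} => f j.1 ω), C ω)) := by
  intro m
  induction m with
  | zero =>
    intro f C
    rw [condEntropy_eq_zero_of_det (fun ω ω' _ => funext fun j => j.elim0)]
    simp
  | succ m ih =>
    intro f C
    have e0 : condEntropy μ (fun ω => fun j => f j ω) C
        = condEntropy μ (fun ω => (f (Fin.last m) ω, fun j : Fin m => f j.castSucc ω))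
            C := by
      refine condEntropy_congr_left (fun ω ω' => ?_)
      constructor
      · intro h
        rw [Prod.ext_iff]
        exact ⟨congrFun h _, funext fun j => congrFun h _⟩
      · intro h
        obtain ⟨h1, h2⟩ := Prod.ext_iff.mp h
        funext j
        refine Fin.lastCases ?_ (fun k => ?_) j
        · exact h1
        · exact congrFun h2 k
    rw [e0, chainRule (μ := μ) (f := fun ω => f (Fin.last m) ω)
      (g := fun ω => fun j : Fin m => f j.castSucc ω) (h := C),
      ih (fun j => f j.castSucc) C, Fin.sum_univ_castSucc]
    refine Eq.trans (add_comm _ _) ?_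
    congr 1
    · -- sum over Fin m terms
      refine Finset.sum_congr rfl fun i _ => ?_
      refine condEntropy_congr_right (fun ω ω' => ?_)
      rw [Prod.ext_iff, Prod.ext_iff]
      refine and_congr_left fun _ => ?_
      constructor
      · intro h
        funext j
        have hm : j.1.1 < m := lt_of_lt_of_le (Fin.lt_def.mp j.2) (by omega)
        have hk : (⟨j.1.1, hm⟩ : Fin m) < i := by
          rw [Fin.lt_def]
          have := Fin.lt_def.mp j.2
          simpa using this
        have hcs : (⟨j.1.1, hm⟩ : Fin m).castSucc = j.1 := by
          apply Fin.ext; simp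
        have := congrFun h (⟨⟨j.1.1, hm⟩, hk⟩ : {k : Fin m // k < i})
        simp only [hcs] at this
        simpa using this
      · intro h
        funext j
        have hk : j.1.castSucc < i.castSucc := by
          rw [Fin.lt_def]
          simpa using Fin.lt_def.mp j.2
        exact congrFun h (⟨j.1.castSucc, hk⟩ : {k : Fin (m+1) // k < i.castSucc})
    · -- last term
      refine condEntropy_congr_right (fun ω ω' => ?_)
      rw [Prod.ext_iff, Prod.ext_iff]
      refine and_congr_left fun _ => ?_
      constructor
      · intro h
        funext j
        have hm : j.1.1 < m := by
          have := Fin.lt_def.mp j.2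
          simpa [Fin.last] using this
        have hcs : (⟨j.1.1, hm⟩ : Fin m).castSucc = j.1 := by
          apply Fin.ext; simp
        have := congrFun h (⟨j.1.1, hm⟩ : Fin m)
        simp only [hcs] at this
        simpa using this
      · intro h
        funext k
        have hk : k.castSucc < Fin.last m := by
          rw [Fin.lt_def]
          simp [Fin.last]
        exact congrFun h (⟨k.castSucc, hk⟩ : {j : Fin (m+1) // j < Fin.last m})
end Aux

/-- **Single-letterization of the DSC-stage rate (converse step for `R_AR`).**
For any function `M = φ(X^n)` into a finite message set,
`∑ᵢ I(X_i; (M, X^{i-1}, Y_{i+1}^n) | Z_i, Y_i) ≤ H(M | Z^n, Y^n) ≤ log₂|ℳ|`;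
in particular if `|ℳ| ≤ 2^{n R_AR}` then `∑ᵢ I(X_i; U_{1,i} | Z_i, Y_i) ≤ n R_AR`. -/
theorem dsc_rate_single_letterization_AR
    {𝒳 𝒴 𝒵 : Type*} [Fintype 𝒳] [Fintype 𝒴] [Fintype 𝒵]
    (p : 𝒳 × 𝒴 × 𝒵 → ℝ) (hp : IsPMF p) (n : ℕ)
    (M : FinAlph) (φ : (Fin n → 𝒳) → M.carrier) :
    -- ∑ᵢ I(X_i; U_{1,i} | Z_i, Y_i) ≤ H(M | Z^n, Y^n)
    (∑ i : Fin n, condMI (iid p n)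
        (fun w => (w i).1)
        (fun w => (φ fun j => (w j).1, past i fun j => (w j).1, fut i fun j => (w j).2.1))
        (fun w => ((w i).2.2, (w i).2.1))
      ≤ condEntropy (iid p n) (fun w => φ fun j => (w j).1)
          (fun w => ((fun j => (w j).2.2), (fun j => (w j).2.1)))) ∧
    -- H(M | Z^n, Y^n) ≤ log₂ |ℳ|
    (condEntropy (iid p n) (fun w => φ fun j => (w j).1)
        (fun w => ((fun j => (w j).2.2), (fun j => (w j).2.1)))
      ≤ Real.logb 2 (Fintype.card M.carrier)) ∧
    -- in particular, if |ℳ| ≤ 2^{n R_AR} then ∑ᵢ I(X_i; U_{1,i} | Z_i, Y_i) ≤ n R_AR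
    (∀ RAR : ℝ, (Fintype.card M.carrier : ℝ) ≤ (2 : ℝ) ^ ((n : ℝ) * RAR) →
      ∑ i : Fin n, condMI (iid p n)
        (fun w => (w i).1)
        (fun w => (φ fun j => (w j).1, past i fun j => (w j).1, fut i fun j => (w j).2.1))
        (fun w => ((w i).2.2, (w i).2.1)) ≤ (n : ℝ) * RAR) := by
  classical
  have hμ : IsPMF (iid p n) := iid_isPMF hp n
  have hWne : Nonempty (𝒳 × 𝒴 × 𝒵) := by
    rcases isEmpty_or_nonempty (𝒳 × 𝒴 × 𝒵) with h | h
    · exfalso; have := hp.2; simp at this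
    · exact h
  have hXne : Nonempty 𝒳 := ⟨(Classical.arbitrary (𝒳 × 𝒴 × 𝒵)).1⟩
  have hMne : Nonempty M.carrier := ⟨φ (fun _ => Classical.arbitrary 𝒳)⟩
  set μ : (Fin n → 𝒳 × 𝒴 × 𝒵) → ℝ := iid p n with hμdef
  set Mf : (Fin n → 𝒳 × 𝒴 × 𝒵) → M.carrier := fun w => φ fun j => (w j).1 with hMf
  set C : (Fin n → 𝒳 × 𝒴 × 𝒵) → ((Fin n → 𝒵) × (Fin n → 𝒴)) :=
    fun w => ((fun j => (w j).2.2), (fun j => (w j).2.1)) with hC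
  set Xt : (Fin n → 𝒳 × 𝒴 × 𝒵) → (Fin n → 𝒳) := fun w j => (w j).1 with hXt
  set A : Fin n → ℝ := fun i => condEntropy μ (fun w => (w i).1)
    (fun w => ((fun j : {j : Fin n // j < i} => (w j.1).1), C w)) with hA
  set B : Fin n → ℝ := fun i => condEntropy μ (fun w => (w i).1)
    (fun w => ((fun j : {j : Fin n // j < i} => (w j.1).1), (Mf w, C w))) with hB
  -- chain rules
  have h4 : condEntropy μ Xt C = ∑ i, A i :=
    chain_tuple (μ := μ) n (fun i w => (w i).1) C
  have h5 : condEntropy μ Xt (fun w => (Mf w, C w)) = ∑ i, B i :=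
    chain_tuple (μ := μ) n (fun i w => (w i).1) (fun w => (Mf w, C w))
  -- H(M|C) = H(Xt|C) - H(Xt|M,C)
  have h6 : condEntropy μ Mf C
      = condEntropy μ Xt C - condEntropy μ Xt (fun w => (Mf w, C w)) := by
    have hcr := chainRule (μ := μ) (f := Xt) (g := Mf) (h := C)
    have hdet : condEntropy μ (fun w => (Xt w, Mf w)) C = condEntropy μ Xt C := by
      refine condEntropy_congr_left (fun ω ω' => ?_)
      rw [Prod.ext_iff]
      exact ⟨fun h => h.1, fun h => ⟨h, by simp only [hMf, hXt] at h ⊢; rw [h]⟩⟩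
    rw [hdet] at hcr
    rw [hcr]
    ring
  -- per-coordinate bounds
  have step2 : ∀ i : Fin n,
      condEntropy μ (fun w => (w i).1) (fun w => ((w i).2.2, (w i).2.1)) = A i := by
    intro i
    have ha : A i = condEntropy μ (fun w => (w i).1)
        (fun w => (((fun j : {j : Fin n // j < i} => (w j.1).1),
          (fun j : {j : Fin n // j ≠ i} => (w j.1).2)), (w i).2)) := by
      refine condEntropy_congr_right (fun ω ω' => ?_)
      constructor
      · intro h
        obtain ⟨h1, h2⟩ := Prod.ext_iff.mp h
        obtain ⟨h2a, h2b⟩ := Prod.ext_iff.mp h2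
        refine Prod.ext (Prod.ext h1 ?_) ?_
        · funext j
          exact Prod.ext (congrFun h2b j.1) (congrFun h2a j.1)
        · exact Prod.ext (congrFun h2b i) (congrFun h2a i)
      · intro h
        obtain ⟨h1, h2⟩ := Prod.ext_iff.mp h
        obtain ⟨h1a, h1b⟩ := Prod.ext_iff.mp h1
        refine Prod.ext h1a (Prod.ext ?_ ?_)
        · funext j
          rcases eq_or_ne j i with hj | hj
          · rw [hj]; exact (Prod.ext_iff.mp h2).2
          · exact (Prod.ext_iff.mp (congrFun h1b ⟨j, hj⟩)).2
        · funext j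
          rcases eq_or_ne j i with hj | hj
          · rw [hj]; exact (Prod.ext_iff.mp h2).1
          · exact (Prod.ext_iff.mp (congrFun h1b ⟨j, hj⟩)).1
    have hb : condEntropy μ (fun w => (fun v : 𝒳 × 𝒴 × 𝒵 => v.1) (w i))
        (fun w => ((fun w' => (((fun j : {j : Fin n // j < i} => (w' j.1).1),
            (fun j : {j : Fin n // j ≠ i} => (w' j.1).2)))) w,
          (fun v : 𝒳 × 𝒴 × 𝒵 => v.2) (w i)))
        = condEntropy μ (fun w => (fun v : 𝒳 × 𝒴 × 𝒵 => v.1) (w i))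
          (fun w => (fun v : 𝒳 × 𝒴 × 𝒵 => v.2) (w i)) := by
      refine indep_coord hp i _ _ _ (fun ω ω' h => ?_)
      refine Prod.ext ?_ ?_
      · show (fun j : {j : Fin n // j < i} => (ω j.1).1)
          = (fun j : {j : Fin n // j < i} => (ω' j.1).1)
        funext j
        rw [h j.1 (ne_of_lt j.2)]
      · show (fun j : {j : Fin n // j ≠ i} => (ω j.1).2)
          = (fun j : {j : Fin n // j ≠ i} => (ω' j.1).2)
        funext j
        rw [h j.1 j.2]
    have hc : condEntropy μ (fun w => (w i).1) (fun w => (w i).2)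
        = condEntropy μ (fun w => (w i).1) (fun w => ((w i).2.2, (w i).2.1)) := by
      refine condEntropy_congr_right (fun ω ω' => ⟨fun h => by rw [h], fun h => ?_⟩)
      obtain ⟨h1, h2⟩ := Prod.ext_iff.mp h
      exact Prod.ext h2 h1
    exact (ha.trans (hb.trans hc)).symm
  have step3 : ∀ i : Fin n, B i ≤ condEntropy μ (fun w => (w i).1)
      (fun w => ((φ fun j => (w j).1, past i fun j => (w j).1,
        fut i fun j => (w j).2.1), ((w i).2.2, (w i).2.1))) := by
    intro i
    refine condEntropy_mono hμ (fun ω ω' h => ?_)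
    obtain ⟨h1, h2⟩ := Prod.ext_iff.mp h
    obtain ⟨h2a, h2b⟩ := Prod.ext_iff.mp h2
    obtain ⟨h2b1, h2b2⟩ := Prod.ext_iff.mp h2b
    simp only [hC] at h2b1 h2b2
    refine Prod.ext (Prod.ext h2a (Prod.ext ?_ ?_)) (Prod.ext ?_ ?_)
    · exact h1
    · funext j
      exact congrFun h2b2 j.1
    · exact congrFun h2b1 i
    · exact congrFun h2b2 i
  have perI : ∀ i : Fin n, condMI μ
      (fun w => (w i).1)
      (fun w => (φ fun j => (w j).1, past i fun j => (w j).1, fut i fun j => (w j).2.1))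
      (fun w => ((w i).2.2, (w i).2.1)) ≤ A i - B i := by
    intro i
    rw [condMI_eq]
    linarith [step2 i, step3 i]
  have part1 : (∑ i : Fin n, condMI μ
      (fun w => (w i).1)
      (fun w => (φ fun j => (w j).1, past i fun j => (w j).1, fut i fun j => (w j).2.1))
      (fun w => ((w i).2.2, (w i).2.1))) ≤ condEntropy μ Mf C := by
    have hsum : (∑ i : Fin n, condMI μ
        (fun w => (w i).1)
        (fun w => (φ fun j => (w j).1, past i fun j => (w j).1, fut i fun j => (w j).2.1))
        (fun w => ((w i).2.2, (w i).2.1))) ≤ ∑ i, (A i - B i) :=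
      Finset.sum_le_sum fun i _ => perI i
    have hsub : (∑ i, (A i - B i)) = (∑ i, A i) - ∑ i, B i := Finset.sum_sub_distrib A B
    have : condEntropy μ Mf C = (∑ i, A i) - ∑ i, B i := by rw [h6, h4, h5]
    linarith
  have part2 : condEntropy μ Mf C ≤ Real.logb 2 (Fintype.card M.carrier) :=
    le_trans (condEntropy_le_entropy hμ Mf C) (entropy_le_logb_card hμ Mf)
  refine ⟨part1, part2, ?_⟩
  intro R hR
  have hcard : (0:ℝ) < (Fintype.card M.carrier : ℝ) := by
    exact_mod_cast Fintype.card_pos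
  have h3 : Real.logb 2 (Fintype.card M.carrier)
      ≤ Real.logb 2 ((2:ℝ) ^ ((n:ℝ) * R)) :=
    Real.logb_le_logb_of_le one_lt_two hcard hR
  rw [Real.logb_rpow (by norm_num : (0:ℝ) < 2) (by norm_num : (2:ℝ) ≠ 1)] at h3
  linarith

end IRSC
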